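/- Every endomorphism of H_p = ∏_{i=1}^n ℤ/p^{e_i}ℤ is induced by an integer matrix A = (a_{ij}) with p^{e_i - e_j} ∣ a_{ij} for all i ≥ j; i.e., the map ψ is surjective onto End(H_p). -/

import Mathlib

/-- Every endomorphism of `H_p = ∏ i, ℤ/p^(e i)ℤ` is induced by an integer
matrix `A` with `p ^ (e i - e j) ∣ A i j` for `i ≥ j`, i.e. `ψ` is surjective. -/
theorem stmt_7 (p n : ℕ) (hp : p.Prime) (e : Fin n → ℕ)
    (he1 : ∀ i, 1 ≤ e i) (he : Monotone e)
    (M : AddMonoid.End (∀ i : Fin n, ZMod (p ^ e i))) :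
    ∃ A : Matrix (Fin n) (Fin n) ℤ,
      (∀ i j, j ≤ i → ((p : ℤ) ^ (e i - e j)) ∣ A i j) ∧
      ∀ h : Fin n → ℤ,
        M (fun i => ((h i : ZMod (p ^ e i)))) = fun i => ((A.mulVec h i : ℤ) : ZMod (p ^ e i)) := by
  haveI : ∀ i : Fin n, NeZero (p ^ e i) := fun i => ⟨pow_ne_zero _ hp.ne_zero⟩
  set δ : Fin n → ∀ i : Fin n, ZMod (p ^ e i) := fun j => Pi.single j 1 with hδ
  set A : Matrix (Fin n) (Fin n) ℤ := fun i j => (((M (δ j)) i).val : ℤ) with hA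
  refine ⟨A, ?_, ?_⟩
  · intro i j hij
    have hsm : ((p : ℤ) ^ e j) • δ j = 0 := by
      funext k
      by_cases hk : k = j
      · subst hk
        have h1 : (((p : ℤ) ^ e k) • δ k) k = ((p : ℤ) ^ e k) • (1 : ZMod (p ^ e k)) := by
          simp [δ]
        rw [h1, Pi.zero_apply, zsmul_one]
        exact_mod_cast ZMod.natCast_self (p ^ e k)
      · simp [δ, Pi.single_eq_of_ne hk]
    have hz : ((p : ℤ) ^ e j) • M (δ j) = 0 := by
      rw [← map_zsmul M, hsm, map_zero]
    have hz' : (((p : ℤ) ^ e j * ((M (δ j)) i).val : ℤ) : ZMod (p ^ e i)) = 0 := by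
      have := congrFun hz i
      simpa [zsmul_eq_mul, ZMod.natCast_val, ZMod.cast_id] using this
    have hdvd : ((p : ℤ) ^ e i) ∣ (p : ℤ) ^ e j * ((M (δ j)) i).val := by
      have := (ZMod.intCast_zmod_eq_zero_iff_dvd _ (p ^ e i)).mp hz'
      simpa using this
    have hee : e j ≤ e i := he hij
    have hsplit : ((p : ℤ) ^ e i) = (p : ℤ) ^ e j * (p : ℤ) ^ (e i - e j) := by
      rw [← pow_add, Nat.add_sub_cancel' hee]
    rw [hsplit] at hdvd
    exact (mul_dvd_mul_iff_left (pow_ne_zero _ (by exact_mod_cast hp.ne_zero) : ((p : ℤ) ^ e j) ≠ 0)).mp hdvd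
  · intro h
    have key : (fun i => ((h i : ZMod (p ^ e i)))) = ∑ j, (h j) • δ j := by
      have h1 : (fun i => ((h i : ZMod (p ^ e i)))) =
          ∑ j, Pi.single j ((h j : ZMod (p ^ e j))) := (Finset.univ_sum_single _).symm
      rw [h1]
      refine Finset.sum_congr rfl fun j _ => ?_
      rw [hδ]
      rw [show ((h j : ZMod (p ^ e j))) = (h j) • (1 : ZMod (p ^ e j)) from (zsmul_one _).symm]
      exact Pi.single_smul j (h j) 1
    rw [key, map_sum]
    funext i
    rw [Finset.sum_apply]
    have hmv : A.mulVec h i = ∑ j, A i j * h j := rfl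
    rw [hmv]
    push_cast
    refine Finset.sum_congr rfl fun j _ => ?_
    rw [map_zsmul M, Pi.smul_apply, zsmul_eq_mul, mul_comm]
    congr 1
    simp [A, ZMod.natCast_val, ZMod.cast_id]
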